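/- Let H be an n×n complex Hermitian matrix, let p ≥ 1 be an integer, and let S : ℝ → M_n(ℂ) be p-times continuously differentiable such that S(t) is unitary for every t and the k-th derivative S⁽ᵏ⁾(0) = (−iH)ᵏ for all 0 ≤ k ≤ p. Then the map J(t) := S′(t)·S(t)* + iH satisfies J⁽ᵏ⁾(0) = 0 for all 0 ≤ k ≤ p − 1. -/

import Mathlib

open Matrix

attribute [local instance] Matrix.linftyOpNormedAddCommGroup Matrix.linftyOpNormedRing
  Matrix.linftyOpNormedAlgebra

open Finset in
/-- Sum rule for `iteratedDeriv`. -/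
theorem trotterAux_iterAdd {F : Type*} [NormedAddCommGroup F] [NormedSpace ℝ F] {k : ℕ}
    {f g : ℝ → F} (hf : ContDiff ℝ k f) (hg : ContDiff ℝ k g) (x : ℝ) :
    iteratedDeriv k (fun t => f t + g t) x = iteratedDeriv k f x + iteratedDeriv k g x := by
  simp [iteratedDeriv_eq_iteratedFDeriv, iteratedFDeriv_add_apply' hf.contDiffAt hg.contDiffAt]

/-- Continuous linear maps commute with `iteratedDeriv`. -/
theorem trotterAux_iterCLM {F G : Type*} [NormedAddCommGroup F] [NormedSpace ℝ F]
    [NormedAddCommGroup G] [NormedSpace ℝ G] (g : F →L[ℝ] G) {f : ℝ → F} {k : ℕ}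
    (hf : ContDiff ℝ k f) (x : ℝ) :
    iteratedDeriv k (fun t => g (f t)) x = g (iteratedDeriv k f x) := by
  have h := g.iteratedFDeriv_comp_left (hf.contDiffAt (x := x)) le_rfl
  simp only [iteratedDeriv_eq_iteratedFDeriv, ← Function.comp_def g f, h,
    ContinuousLinearMap.compContinuousMultilinearMap_coe, Function.comp_apply]

/-- Pascal-style rearrangement of binomial sums. -/
theorem trotterAux_pascalSum {A : Type*} [AddCommMonoid A] [Module ℝ A] (n : ℕ) (T : ℕ → A) :
    ∑ j ∈ Finset.range (n+2), ((n+1).choose j : ℝ) • T j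
      = ∑ j ∈ Finset.range (n+1), (n.choose j : ℝ) • T (j+1)
        + ∑ j ∈ Finset.range (n+1), (n.choose j : ℝ) • T j := by
  rw [Finset.sum_range_succ' _ (n+1)]
  simp only [Nat.choose_succ_succ, Nat.cast_add, add_smul, Finset.sum_add_distrib]
  have h2 : ∑ j ∈ Finset.range (n+1), ((n.choose (j+1) : ℝ)) • T (j+1)
      + ((n+1).choose 0 : ℝ) • T 0 = ∑ j ∈ Finset.range (n+1), (n.choose j : ℝ) • T j := by
    have := Finset.sum_range_succ' (fun j => (n.choose j : ℝ) • T j) (n+1)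
    rw [Finset.sum_range_succ] at this
    simp only [Nat.choose_succ_self, Nat.cast_zero, zero_smul, add_zero] at this
    simpa using this.symm
  rw [add_assoc, h2]

/-- Leibniz rule for `iteratedDeriv` of a product. -/
theorem trotterAux_iterLeibniz {A : Type*} [NormedRing A] [NormedAlgebra ℝ A] (n : ℕ) :
    ∀ {f g : ℝ → A}, ContDiff ℝ n f → ContDiff ℝ n g → ∀ t : ℝ,
    iteratedDeriv n (fun x => f x * g x) t
      = ∑ j ∈ Finset.range (n+1),
          (n.choose j : ℝ) • (iteratedDeriv j f t * iteratedDeriv (n-j) g t) := by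
  induction n with
  | zero => intro f g hf hg t; simp
  | succ n ih =>
    intro f g hf hg t
    have hf' : ContDiff ℝ ((n : WithTop ℕ∞) + 1) f := by exact_mod_cast hf
    have hg' : ContDiff ℝ ((n : WithTop ℕ∞) + 1) g := by exact_mod_cast hg
    have hdf : ContDiff ℝ n (deriv f) := (contDiff_succ_iff_deriv.mp hf').2.2
    have hdg : ContDiff ℝ n (deriv g) := (contDiff_succ_iff_deriv.mp hg').2.2
    have hfn : ContDiff ℝ n f := hf'.of_le le_self_add
    have hgn : ContDiff ℝ n g := hg'.of_le le_self_add
    have hf1 : Differentiable ℝ f := (contDiff_succ_iff_deriv.mp hf').1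
    have hg1 : Differentiable ℝ g := (contDiff_succ_iff_deriv.mp hg').1
    have hderiv : deriv (fun x => f x * g x) = fun x => deriv f x * g x + f x * deriv g x := by
      funext x
      exact deriv_mul (hf1 x) (hg1 x)
    rw [iteratedDeriv_succ', hderiv,
      trotterAux_iterAdd (hdf.mul hgn) (hfn.mul hdg) t, ih hdf hgn t, ih hfn hdg t,
      trotterAux_pascalSum n (fun j => iteratedDeriv j f t * iteratedDeriv (n+1-j) g t)]
    congr 1
    · refine Finset.sum_congr rfl fun j hj => ?_
      rw [← iteratedDeriv_succ', Nat.succ_sub_succ]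
    · refine Finset.sum_congr rfl fun j hj => ?_
      simp only [Finset.mem_range, Nat.lt_succ_iff] at hj
      have h : n - j + 1 = n + 1 - j := by omega
      rw [← iteratedDeriv_succ', h]

/-- Conjugate transpose as a continuous `ℝ`-linear map on matrices. -/
noncomputable def trotterAux_ctCLM (n : ℕ) :
    Matrix (Fin n) (Fin n) ℂ →L[ℝ] Matrix (Fin n) (Fin n) ℂ :=
  LinearMap.toContinuousLinearMap
    { toFun := fun A => Aᴴ
      map_add' := fun A B => Matrix.conjTranspose_add A B
      map_smul' := fun r A => by
        ext i j
        simp [Matrix.conjTranspose_apply, star_smul] }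

theorem trotterAux_ctCLM_apply (n : ℕ) (A : Matrix (Fin n) (Fin n) ℂ) :
    trotterAux_ctCLM n A = Aᴴ := rfl

/-- If `S : ℝ → Mₙ(ℂ)` is a `p`-times continuously differentiable family of unitary matrices
whose derivatives at `0` satisfy `S⁽ᵏ⁾(0) = (−iH)ᵏ` for `0 ≤ k ≤ p` (a `p`-th order product
formula for `exp(−iHt)`), then `J(t) = S′(t)·S(t)* + iH` satisfies `J⁽ᵏ⁾(0) = 0` for
`0 ≤ k ≤ p − 1`. -/
theorem trotter_generator_vanishing_derivs
    (n : ℕ) (H : Matrix (Fin n) (Fin n) ℂ) (hH : H.IsHermitian)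
    (p : ℕ) (hp : 1 ≤ p)
    (S : ℝ → Matrix (Fin n) (Fin n) ℂ) (hS : ContDiff ℝ p S)
    (hunit : ∀ t, S t ∈ Matrix.unitaryGroup (Fin n) ℂ)
    (hderivs : ∀ k ≤ p, iteratedDeriv k S 0 = ((-Complex.I) • H) ^ k) :
    ∀ k ≤ p - 1, iteratedDeriv k (fun t => deriv S t * (S t)ᴴ + Complex.I • H) 0 = 0 := by
  obtain ⟨q, rfl⟩ : ∃ q, p = q + 1 := ⟨p - 1, by omega⟩
  intro k hk
  simp only [Nat.add_sub_cancel] at hk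
  set A := (-Complex.I) • H with hA
  have hS' : ContDiff ℝ ((q : WithTop ℕ∞) + 1) S := by exact_mod_cast hS
  have hdS : ContDiff ℝ q (deriv S) := (contDiff_succ_iff_deriv.mp hS').2.2
  have hSq : ContDiff ℝ q S := hS'.of_le le_self_add
  have hkq : (k : WithTop ℕ∞) ≤ q := by exact_mod_cast hk
  have hf : ContDiff ℝ k (deriv S) := hdS.of_le hkq
  have hg : ContDiff ℝ k (fun t => (S t)ᴴ) := by
    have h := (trotterAux_ctCLM n).contDiff.comp (hSq.of_le hkq)
    exact h
  -- derivatives of the conjugate transpose at 0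
  have hct : ∀ m, m ≤ k → iteratedDeriv m (fun t => (S t)ᴴ) 0 = (-A) ^ m := by
    intro m hm
    have hmq : (m : WithTop ℕ∞) ≤ q := by exact_mod_cast hm.trans hk
    have h1 : iteratedDeriv m (fun t => (S t)ᴴ) 0 = (iteratedDeriv m S 0)ᴴ := by
      have h := trotterAux_iterCLM (trotterAux_ctCLM n) (hSq.of_le hmq) 0
      exact h
    rw [h1, hderivs m (by omega), conjTranspose_pow]
    congr 1
    rw [hA, conjTranspose_smul, hH.eq]
    simp [Complex.star_def, neg_smul]
  rcases Nat.eq_zero_or_pos k with hk0 | hk0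
  · subst hk0
    have h1 := hderivs 1 (by omega)
    have h0 := hderivs 0 (by omega)
    rw [iteratedDeriv_one] at h1
    rw [iteratedDeriv_zero] at h0
    simp only [iteratedDeriv_zero]
    erw [h1, h0]
    simp [hA, neg_smul]
  · -- k ≥ 1
    have hconst : iteratedDeriv k (fun _ : ℝ => Complex.I • H) 0 = 0 := by
      simp [iteratedDeriv_eq_iteratedFDeriv, iteratedFDeriv_const_of_ne hk0.ne']
    rw [trotterAux_iterAdd (hf.mul hg) contDiff_const 0, hconst, add_zero,
      trotterAux_iterLeibniz k hf hg 0]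
    have hterm : ∀ j ∈ Finset.range (k+1),
        (k.choose j : ℝ) • (iteratedDeriv j (deriv S) 0
            * iteratedDeriv (k-j) (fun t => (S t)ᴴ) 0)
          = ((k.choose j : ℝ) * (-1)^(k-j)) • A^(k+1) := by
      intro j hj
      simp only [Finset.mem_range, Nat.lt_succ_iff] at hj
      erw [← iteratedDeriv_succ', hderivs (j+1) (by omega), hct (k-j) (by omega)]
      have hnA : (-A) ^ (k-j) = ((-1:ℝ)^(k-j)) • A^(k-j) := by
        rw [← neg_one_smul ℝ A, smul_pow]
      have he : (j+1) + (k-j) = k+1 := by omega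
      rw [hnA, mul_smul_comm, smul_smul, ← pow_add, he]
    rw [Finset.sum_congr rfl hterm, ← Finset.sum_smul]
    have hsum : ∑ j ∈ Finset.range (k+1), ((k.choose j : ℝ) * (-1)^(k-j)) = 0 := by
      calc ∑ j ∈ Finset.range (k+1), ((k.choose j : ℝ) * (-1)^(k-j))
          = ∑ j ∈ Finset.range (k+1), (1:ℝ)^j * (-1)^(k-j) * (k.choose j) := by
            refine Finset.sum_congr rfl fun j _ => by ring
        _ = ((1:ℝ) + (-1))^k := (add_pow 1 (-1) k).symm
        _ = 0 := by norm_num [zero_pow hk0.ne']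
    rw [hsum, zero_smul]
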